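/- Let (X(0), …, X(m)) be a supermartingale with respect to a filtration F(0) ⊆ F(1) ⊆ ⋯ ⊆ F(m). Suppose that |X(i+1) − X(i)| ≤ K and E[|X(i+1) − X(i)| | F(i)] ≤ D for all 0 ≤ i < m. Then for any t > 0, Pr[X(m) ≥ X(0) + t] ≤ exp(−t² / (2mKD + 2Kt)). -/

import Mathlib

open MeasureTheory

lemma exp_le_quadratic {x u : ℝ} (hu0 : 0 ≤ u) (hu1 : u < 1) (hx : |x| ≤ u) :
    Real.exp x ≤ 1 + x + x ^ 2 / (2 * (1 - u)) := by
  have hx1 : |x| ≤ 1 := hx.trans hu1.le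
  have h := Real.exp_bound hx1 (n := 3) (by norm_num)
  have hsum : ∑ m ∈ Finset.range 3, x ^ m / m.factorial = 1 + x + x ^ 2 / 2 := by
    simp [Finset.sum_range_succ, Nat.factorial]
  rw [hsum] at h
  have h2 := (abs_sub_le_iff.1 h).1
  norm_num [Nat.factorial] at h2
  have hx3 : |x| ^ 3 ≤ u * x ^ 2 := by
    calc |x| ^ 3 = |x| * |x| ^ 2 := by ring
    _ ≤ u * x ^ 2 := by
        rw [sq_abs]
        exact mul_le_mul_of_nonneg_right hx (sq_nonneg x)
  have hmain : Real.exp x ≤ 1 + x + x ^ 2 * (1 / 2 + u * (2 / 9)) := by nlinarith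
  refine hmain.trans ?_
  have h1u : 0 < 1 - u := by linarith
  have hc : (1 / 2 + u * (2 / 9)) ≤ (2 * (1 - u))⁻¹ := by
    rw [← sub_nonneg]
    have : (2 * (1 - u))⁻¹ - (1 / 2 + u * (2 / 9)) = (u * (5 + 4 * u)) / (18 * (1 - u)) := by
      field_simp; ring
    rw [this]; positivity
  have := mul_le_mul_of_nonneg_left hc (sq_nonneg x)
  have hdiv : x ^ 2 / (2 * (1 - u)) = x ^ 2 * (2 * (1 - u))⁻¹ := div_eq_mul_inv _ _
  linarith

/-- Corollary of Freedman's inequality: if `(X 0, …, X m)` is a supermartingale with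
respect to the filtration `ℱ`, with one-step differences bounded by `K` and with
conditional expected absolute one-step differences bounded by `D`, then for any `t > 0`,
`Pr[X m ≥ X 0 + t] ≤ exp (-t² / (2 m K D + 2 K t))`. -/
theorem freedman_corollary {Ω : Type*} {m0 : MeasurableSpace Ω} {μ : Measure Ω}
    [IsProbabilityMeasure μ] (ℱ : Filtration ℕ m0) (X : ℕ → Ω → ℝ)
    (hX : Supermartingale X ℱ μ) (m : ℕ) (K D t : ℝ) (hK : 0 < K) (hD : 0 < D)
    (ht : 0 < t)
    (hbdd : ∀ i < m, ∀ᵐ ω ∂μ, |X (i + 1) ω - X i ω| ≤ K)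
    (hdev : ∀ i < m, ∀ᵐ ω ∂μ,
      MeasureTheory.condExp (ℱ i) μ (fun ω' => |X (i + 1) ω' - X i ω'|) ω ≤ D) :
    μ {ω | X 0 ω + t ≤ X m ω} ≤
      ENNReal.ofReal (Real.exp (-t ^ 2 / (2 * m * K * D + 2 * K * t))) := by
  rcases Nat.eq_zero_or_pos m with rfl | hm
  · have : {ω | X 0 ω + t ≤ X 0 ω} = ∅ := by
      ext ω; simp only [Set.mem_setOf_eq, Set.mem_empty_iff_false, iff_false, not_le]; linarith
    rw [this]; simp
  -- setup
  set A : ℝ := m * K * D with hA_def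
  have hA : 0 < A := by positivity
  set l : ℝ := t / (A + K * t) with hl_def
  have hAKt : 0 < A + K * t := by positivity
  have hl : 0 < l := by positivity
  set u : ℝ := l * K with hu_def
  have hu0 : 0 < u := by positivity
  have hu1 : u < 1 := by
    rw [hu_def, hl_def, div_mul_eq_mul_div, div_lt_one hAKt]
    nlinarith
  set c : ℝ := 1 / (2 * (1 - u)) with hc_def
  have h1u : 0 < 1 - u := by linarith
  have hc0 : 0 < c := by positivity
  set c' : ℝ := l ^ 2 * K * D * c with hc'_def
  have hc'0 : 0 < c' := by positivity
  set Y : ℕ → Ω → ℝ := fun n ω => Real.exp (l * (X n ω - X 0 ω)) with hY_def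
  -- strong measurability
  have hXsm : ∀ n, StronglyMeasurable[m0] (X n) := fun n =>
    (hX.stronglyMeasurable n).mono (ℱ.le n)
  have hYsm : ∀ n, StronglyMeasurable[m0] (Y n) := fun n =>
    (Real.continuous_exp.comp_stronglyMeasurable
      (((hXsm n).sub (hXsm 0)).const_mul l))
  -- a.e. bound on increments of X
  have habs : ∀ n ≤ m, ∀ᵐ ω ∂μ, |X n ω - X 0 ω| ≤ n * K := by
    intro n hn
    induction n with
    | zero => simp
    | succ k ih =>
      have hk : k < m := Nat.lt_of_succ_le hn
      filter_upwards [ih (le_of_lt hk), hbdd k hk] with ω h1 h2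
      have : |X (k+1) ω - X 0 ω| ≤ |X (k+1) ω - X k ω| + |X k ω - X 0 ω| := by
        have := abs_sub_le (X (k+1) ω) (X k ω) (X 0 ω); linarith [this]
      push_cast
      nlinarith
  -- integrability of Y
  have hYnonneg : ∀ n ω, 0 ≤ Y n ω := fun n ω => (Real.exp_pos _).le
  have hYint : ∀ n ≤ m, Integrable (Y n) μ := by
    intro n hn
    refine Integrable.mono' (integrable_const (Real.exp (l * (n * K)))) (hYsm n).aestronglyMeasurable ?_
    filter_upwards [habs n hn] with ω hω
    rw [Real.norm_eq_abs, abs_of_nonneg (hYnonneg n ω)]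
    exact Real.exp_le_exp.2 (mul_le_mul_of_nonneg_left ((le_abs_self _).trans hω) hl.le)
  -- the key one-step bound
  have hstep : ∀ n < m, ∫ ω, Y (n+1) ω ∂μ ≤ (1 + c') * ∫ ω, Y n ω ∂μ := by
    intro n hn
    set Δ : Ω → ℝ := fun ω => X (n+1) ω - X n ω with hΔ_def
    set Z : Ω → ℝ := fun ω => Real.exp (l * Δ ω) with hZ_def
    have hΔsm : StronglyMeasurable[m0] Δ := (hXsm (n+1)).sub (hXsm n)
    have hZsm : StronglyMeasurable[m0] Z :=
      Real.continuous_exp.comp_stronglyMeasurable (hΔsm.const_mul l)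
    have hΔint : Integrable Δ μ := (hX.integrable (n+1)).sub (hX.integrable n)
    have hΔabs_int : Integrable (fun ω => |Δ ω|) μ := hΔint.abs
    have hΔsq_int : Integrable (fun ω => Δ ω ^ 2) μ := by
      refine Integrable.mono' (integrable_const (K ^ 2)) (hΔsm.pow 2).aestronglyMeasurable ?_
      filter_upwards [hbdd n hn] with ω hω
      rw [Real.norm_eq_abs, abs_of_nonneg (sq_nonneg _), ← sq_abs]
      exact pow_le_pow_left₀ (abs_nonneg _) hω 2
    have hZint : Integrable Z μ := by
      refine Integrable.mono' (integrable_const (Real.exp (l * K)))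
        hZsm.aestronglyMeasurable ?_
      filter_upwards [hbdd n hn] with ω hω
      rw [Real.norm_eq_abs, abs_of_nonneg (Real.exp_pos _).le]
      exact Real.exp_le_exp.2 (mul_le_mul_of_nonneg_left (hω.trans' (le_abs_self _)) hl.le)
    -- Y (n+1) = Y n * Z
    have hfact : Y (n+1) = Y n * Z := by
      funext ω
      simp only [hY_def, hZ_def, hΔ_def, Pi.mul_apply, ← Real.exp_add]
      ring_nf
    -- measurability of Y n wrt ℱ n
    have hYn_sm : StronglyMeasurable[ℱ n] (Y n) :=
      Real.continuous_exp.comp_stronglyMeasurable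
        (((hX.stronglyMeasurable n).sub
          ((hX.stronglyMeasurable 0).mono (ℱ.mono (Nat.zero_le n)))).const_mul l)
    -- pull-out
    have hpull : μ[Y (n+1) | ℱ n] =ᵐ[μ] Y n * μ[Z | ℱ n] := by
      rw [hfact]
      exact condExp_mul_of_stronglyMeasurable_left hYn_sm (hfact ▸ hYint (n+1) hn) hZint
    -- conditional bound on Z
    set Δsq : Ω → ℝ := fun ω => Δ ω ^ 2 with hΔsq_def
    set Δabs : Ω → ℝ := fun ω => |Δ ω| with hΔabs_def
    have hΔsq_int' : Integrable Δsq μ := hΔsq_int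
    have hZcond : μ[Z | ℱ n] ≤ᵐ[μ] fun _ => 1 + c' := by
      set W : Ω → ℝ := (fun _ => (1:ℝ)) + l • Δ + (c * l ^ 2) • Δsq with hW_def
      have hWint : Integrable W μ :=
        ((integrable_const (1:ℝ)).add (hΔint.smul l)).add (hΔsq_int'.smul _)
      have hZW : Z ≤ᵐ[μ] W := by
        filter_upwards [hbdd n hn] with ω hω
        have hxu : |l * Δ ω| ≤ u := by
          rw [abs_mul, abs_of_nonneg hl.le, hu_def]
          exact mul_le_mul_of_nonneg_left hω hl.le
        have hq := exp_le_quadratic hu0.le hu1 hxu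
        simp only [hW_def, hZ_def, hΔsq_def, Pi.add_apply, Pi.smul_apply, smul_eq_mul]
        calc Real.exp (l * Δ ω) ≤ 1 + l * Δ ω + (l * Δ ω) ^ 2 / (2 * (1 - u)) := hq
        _ = 1 + l * Δ ω + (c * l ^ 2) * Δ ω ^ 2 := by rw [hc_def]; ring
      have h1 : μ[Z | ℱ n] ≤ᵐ[μ] μ[W | ℱ n] := condExp_mono hZint hWint hZW
      -- compute condexp of W
      have hXn_eq : μ[X n | ℱ n] = X n :=
        condExp_of_stronglyMeasurable (ℱ.le n) (hX.stronglyMeasurable n) (hX.integrable n)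
      have hΔcond : μ[Δ | ℱ n] ≤ᵐ[μ] 0 := by
        have hsub : μ[Δ | ℱ n] =ᵐ[μ] μ[X (n+1) | ℱ n] - μ[X n | ℱ n] :=
          condExp_sub (hX.integrable (n+1)) (hX.integrable n) (ℱ n)
        filter_upwards [hsub, hX.condExp_ae_le (Nat.le_succ n)] with ω h1 h3
        have h2 := congrFun hXn_eq ω
        simp only [Pi.sub_apply, Pi.zero_apply] at *
        rw [h1, h2]; linarith
      have hΔsqcond : μ[Δsq | ℱ n] ≤ᵐ[μ] fun _ => K * D := by
        have hmono : μ[Δsq | ℱ n] ≤ᵐ[μ] μ[K • Δabs | ℱ n] := by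
          refine condExp_mono hΔsq_int' (hΔint.abs.smul K) ?_
          filter_upwards [hbdd n hn] with ω hω
          simp only [Pi.smul_apply, smul_eq_mul, hΔabs_def, hΔsq_def]
          calc Δ ω ^ 2 = |Δ ω| * |Δ ω| := by rw [← sq_abs]; ring
          _ ≤ K * |Δ ω| := mul_le_mul_of_nonneg_right hω (abs_nonneg _)
        have hsmul : μ[K • Δabs | ℱ n] =ᵐ[μ] K • μ[Δabs | ℱ n] :=
          condExp_smul (μ := μ) (m := ℱ n) K Δabs
        have hdev' : ∀ᵐ ω ∂μ, (μ[Δabs | ℱ n]) ω ≤ D := hdev n hn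
        filter_upwards [hmono, hsmul, hdev'] with ω h1 h2 h3
        simp only [Pi.smul_apply, smul_eq_mul] at h2
        rw [h2] at h1
        exact h1.trans (mul_le_mul_of_nonneg_left h3 hK.le)
      have hW1 : μ[W | ℱ n] =ᵐ[μ]
          μ[(fun _ => (1:ℝ)) + l • Δ | ℱ n] + μ[(c * l ^ 2) • Δsq | ℱ n] :=
        condExp_add ((integrable_const (1:ℝ)).add (hΔint.smul l)) (hΔsq_int'.smul _) (ℱ n)
      have hW2 : μ[(fun _ => (1:ℝ)) + l • Δ | ℱ n] =ᵐ[μ]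
          μ[fun _ => (1:ℝ) | ℱ n] + μ[l • Δ | ℱ n] :=
        condExp_add (integrable_const (1:ℝ)) (hΔint.smul l) (ℱ n)
      have hconst : μ[fun _ => (1:ℝ) | ℱ n] = fun _ => (1:ℝ) :=
        condExp_const (ℱ.le n) (1:ℝ)
      have hW3 : μ[l • Δ | ℱ n] =ᵐ[μ] l • μ[Δ | ℱ n] :=
        condExp_smul (μ := μ) (m := ℱ n) l Δ
      have hW4 : μ[(c * l ^ 2) • Δsq | ℱ n] =ᵐ[μ] (c * l ^ 2) • μ[Δsq | ℱ n] :=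
        condExp_smul (μ := μ) (m := ℱ n) (c * l ^ 2) Δsq
      filter_upwards [h1, hW1, hW2, hW3, hW4, hΔcond, hΔsqcond] with ω e1 e2 e3 e4 e5 e6 e7
      have hcω := congrFun hconst ω
      simp only [Pi.add_apply, Pi.smul_apply, Pi.zero_apply, smul_eq_mul] at e1 e2 e3 e4 e5 e6 e7
      rw [e2, e3, e4, e5, hcω] at e1
      have hc'eq : c' = (c * l ^ 2) * (K * D) := by rw [hc'_def]; ring
      have h6 : l * (μ[Δ|ℱ n]) ω ≤ 0 := by
        have := mul_le_mul_of_nonneg_left e6 hl.le; simpa using this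
      have h7 : (c * l ^ 2) * (μ[Δsq|ℱ n]) ω ≤ (c * l ^ 2) * (K * D) :=
        mul_le_mul_of_nonneg_left e7 (by positivity)
      rw [hc'eq]
      linarith
    -- integrate
    have hmono : ∀ᵐ ω ∂μ, (μ[Y (n+1) | ℱ n]) ω ≤ (1 + c') * Y n ω := by
      filter_upwards [hpull, hZcond] with ω h1 h2
      rw [h1]
      simp only [Pi.mul_apply]
      calc Y n ω * (μ[Z|ℱ n]) ω ≤ Y n ω * (1 + c') := mul_le_mul_of_nonneg_left h2 (hYnonneg n ω)
      _ = (1 + c') * Y n ω := by ring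
    calc ∫ ω, Y (n+1) ω ∂μ = ∫ ω, (μ[Y (n+1) | ℱ n]) ω ∂μ :=
          (integral_condExp (ℱ.le n)).symm
    _ ≤ ∫ ω, (1 + c') * Y n ω ∂μ :=
          integral_mono_ae integrable_condExp ((hYint n hn.le).const_mul _) hmono
    _ = (1 + c') * ∫ ω, Y n ω ∂μ := integral_const_mul _ _
  -- iterate
  have hiter : ∀ n ≤ m, ∫ ω, Y n ω ∂μ ≤ (1 + c') ^ n := by
    intro n hn
    induction n with
    | zero => simp [hY_def]
    | succ k ih =>
      have hk : k < m := Nat.lt_of_succ_le hn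
      calc ∫ ω, Y (k+1) ω ∂μ ≤ (1 + c') * ∫ ω, Y k ω ∂μ := hstep k hk
      _ ≤ (1 + c') * (1 + c') ^ k :=
          mul_le_mul_of_nonneg_left (ih hk.le) (by linarith)
      _ = (1 + c') ^ (k + 1) := by ring
  -- Markov
  have hset : {ω | X 0 ω + t ≤ X m ω} = {ω | Real.exp (l * t) ≤ Y m ω} := by
    ext ω
    simp only [Set.mem_setOf_eq, hY_def, Real.exp_le_exp]
    constructor
    · intro h; exact mul_le_mul_of_nonneg_left (by linarith) hl.le
    · intro h
      have := le_of_mul_le_mul_left h hl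
      linarith
  have hmarkov := mul_meas_ge_le_integral_of_nonneg
    (Filter.Eventually.of_forall (hYnonneg m)) (hYint m le_rfl) (Real.exp (l * t))
  have hEbound : ∫ ω, Y m ω ∂μ ≤ Real.exp (m * c') := by
    refine (hiter m le_rfl).trans ?_
    calc (1 + c') ^ m ≤ (Real.exp c') ^ m := by
          apply pow_le_pow_left₀ (by linarith)
          linarith [Real.add_one_le_exp c']
    _ = Real.exp (m * c') := by rw [← Real.exp_nat_mul]
  have htoReal : (μ {ω | X 0 ω + t ≤ X m ω}).toReal ≤ Real.exp (m * c' - l * t) := by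
    rw [hset]
    have hexp_pos : (0:ℝ) < Real.exp (l * t) := Real.exp_pos _
    rw [Real.exp_sub]
    rw [le_div_iff₀ hexp_pos]
    calc (μ {ω | Real.exp (l * t) ≤ Y m ω}).toReal * Real.exp (l * t)
        = Real.exp (l * t) * (μ {ω | Real.exp (l * t) ≤ Y m ω}).toReal := by ring
    _ ≤ ∫ ω, Y m ω ∂μ := hmarkov
    _ ≤ Real.exp (m * c') := hEbound
  -- final arithmetic
  have harith : m * c' - l * t = -t ^ 2 / (2 * m * K * D + 2 * K * t) := by
    rw [hc'_def, hc_def, hl_def, hu_def, hl_def, hA_def]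
    have hne : (m : ℝ) * K * D + K * t ≠ 0 := by positivity
    have h2 : 1 - t / (m * K * D + K * t) * K = (m * K * D) / (m * K * D + K * t) := by
      field_simp
      ring
    rw [h2]
    have hmKD : (0:ℝ) < m * K * D := by positivity
    field_simp
    ring
  rw [← harith]
  have := measure_ne_top μ {ω | X 0 ω + t ≤ X m ω}
  rw [← ENNReal.ofReal_toReal this]
  exact ENNReal.ofReal_le_ofReal htoReal
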